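/- Under the setup of the previous identity (π probability vector, P i ∈ [0,1], β = ∑ π i P i ∈ (0,1), children distributions π₀, π₁, J = 2 ∑ π i |P i - β|, entropy H with natural log), the entropy reduction satisfies H(π) - (1-β)H(π₀) - β H(π₁) ≥ J^2 / (8 * β * (1-β)). -/

import Mathlib

open Finset

private lemma erlb_log_lb {t : ℝ} (ht : 0 < t) : 1 - 1/t ≤ Real.log t := by
  simpa [one_div] using Real.one_sub_inv_le_log_of_pos ht

private lemma erlb_aux_ge_one {t : ℝ} (ht : 1 ≤ t) :
    2 * (t - 1) ≤ (t + 1) * Real.log t := by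
  have hd : ∀ x : ℝ, 0 < x →
      HasDerivAt (fun y : ℝ => (y + 1) * Real.log y - 2 * (y - 1))
        (Real.log x + (x + 1) * x⁻¹ - 2) x := by
    intro x hx
    have h1 : HasDerivAt (fun y : ℝ => y + 1) 1 x := (hasDerivAt_id x).add_const 1
    have h2 : HasDerivAt Real.log x⁻¹ x := Real.hasDerivAt_log hx.ne'
    have h3 := h1.mul h2
    have h4 : HasDerivAt (fun y : ℝ => 2 * (y - 1)) 2 x := by
      simpa using ((hasDerivAt_id x).sub_const 1).const_mul 2
    have := h3.sub h4
    exact this.congr_deriv (by ring)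
  have hmono : MonotoneOn (fun y : ℝ => (y + 1) * Real.log y - 2 * (y - 1)) (Set.Ici 1) := by
    apply monotoneOn_of_deriv_nonneg (convex_Ici 1)
    · intro x hx
      have hx0 : (0:ℝ) < x := lt_of_lt_of_le one_pos hx
      exact ((hd x hx0).continuousAt).continuousWithinAt
    · intro x hx
      rw [interior_Ici] at hx
      exact ((hd x (lt_trans one_pos hx)).differentiableAt).differentiableWithinAt
    · intro x hx
      rw [interior_Ici] at hx
      have hx0 : (0:ℝ) < x := lt_trans one_pos hx
      rw [(hd x hx0).deriv]
      have := erlb_log_lb hx0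
      have hxx : (x + 1) * x⁻¹ = 1 + 1/x := by field_simp
      rw [hxx]
      linarith
  have h1 := hmono (Set.mem_Ici.mpr le_rfl) (Set.mem_Ici.mpr ht) ht
  simp at h1
  linarith

private lemma erlb_aux_le_one {t : ℝ} (ht0 : 0 < t) (ht1 : t ≤ 1) :
    (t + 1) * Real.log t ≤ 2 * (t - 1) := by
  have h := erlb_aux_ge_one (one_le_one_div ht0 ht1)
  rw [Real.log_div one_ne_zero ht0.ne', Real.log_one] at h
  have ht' : t * (1/t) = 1 := by field_simp
  nlinarith [mul_le_mul_of_nonneg_left h ht0.le]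

private lemma erlb_key {t : ℝ} (ht : 0 < t) :
    3 * (t - 1)^2 ≤ 2 * (t + 2) * (t * Real.log t - t + 1) := by
  set h : ℝ → ℝ := fun x => 2 * (x + 2) * (x * Real.log x - x + 1) - 3 * (x - 1)^2 with hh
  have hd : ∀ x : ℝ, 0 < x →
      HasDerivAt h (4 * ((x + 1) * Real.log x - 2 * (x - 1))) x := by
    intro x hx
    have h1 : HasDerivAt (fun y : ℝ => 2 * (y + 2)) 2 x := by
      simpa using ((hasDerivAt_id x).add_const 2).const_mul 2
    have h2 : HasDerivAt (fun y : ℝ => y * Real.log y - y + 1) (Real.log x + 1 - 1) x := by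
      simpa using ((Real.hasDerivAt_mul_log hx.ne').sub (hasDerivAt_id x)).add_const 1
    have h3 := h1.mul h2
    have h4 : HasDerivAt (fun y : ℝ => 3 * (y - 1)^2) (3 * (2 * (x - 1))) x := by
      have := (((hasDerivAt_id x).sub_const 1).pow 2).const_mul 3
      simpa using this
    have := h3.sub h4
    exact this.congr_deriv (by ring)
  have h1eq : h 1 = 0 := by simp [hh]
  rcases le_or_gt 1 t with hge | hlt
  · have hmono : MonotoneOn h (Set.Ici 1) := by
      apply monotoneOn_of_deriv_nonneg (convex_Ici 1)
      · intro x hx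
        exact ((hd x (lt_of_lt_of_le one_pos hx)).continuousAt).continuousWithinAt
      · intro x hx
        rw [interior_Ici] at hx
        exact ((hd x (lt_trans one_pos hx)).differentiableAt).differentiableWithinAt
      · intro x hx
        rw [interior_Ici] at hx
        have hx0 : (0:ℝ) < x := lt_trans one_pos hx
        rw [(hd x hx0).deriv]
        have := erlb_aux_ge_one hx.le
        linarith
    have := hmono (Set.mem_Ici.mpr le_rfl) (Set.mem_Ici.mpr hge) hge
    rw [h1eq] at this
    simp only [hh] at this
    linarith
  · have hanti : AntitoneOn h (Set.Icc t 1) := by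
      apply antitoneOn_of_deriv_nonpos (convex_Icc t 1)
      · intro x hx
        exact ((hd x (lt_of_lt_of_le ht hx.1)).continuousAt).continuousWithinAt
      · intro x hx
        rw [interior_Icc] at hx
        exact ((hd x (lt_of_lt_of_le ht hx.1.le)).differentiableAt).differentiableWithinAt
      · intro x hx
        rw [interior_Icc] at hx
        have hx0 : (0:ℝ) < x := lt_trans ht hx.1
        rw [(hd x hx0).deriv]
        have := erlb_aux_le_one hx0 hx.2.le
        linarith
    have := hanti (Set.mem_Icc.mpr ⟨le_refl t, hlt.le⟩) (Set.mem_Icc.mpr ⟨hlt.le, le_refl 1⟩) hlt.le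
    rw [h1eq] at this
    simp only [hh] at this
    linarith

private lemma erlb_pointwise {x y : ℝ} (hx : 0 ≤ x) (hy : 0 < y) :
    3 * (x - y)^2 / (2 * (x + 2 * y)) ≤ x * Real.log (x / y) - x + y := by
  rcases eq_or_lt_of_le hx with h0 | hxpos
  · have e : 3 * (x - y)^2 / (2 * (x + 2 * y)) = 3 * y / 4 := by
      rw [← h0]; field_simp; ring
    rw [e, ← h0]
    simp
    linarith
  · have ht := erlb_key (div_pos hxpos hy)
    rw [div_le_iff₀ (by positivity : (0:ℝ) < 2 * (x + 2 * y))]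
    set L := Real.log (x / y) with hL
    have h2 := mul_le_mul_of_nonneg_left ht (sq_nonneg y)
    have e1 : y^2 * (3 * (x/y - 1)^2) = 3 * (x - y)^2 := by field_simp
    have e2 : y^2 * (2 * (x/y + 2) * ((x/y) * L - x/y + 1))
        = (x * L - x + y) * (2 * (x + 2 * y)) := by field_simp
    linarith

private lemma erlb_pinsker {k : ℕ} (p q : Fin k → ℝ) (hp : ∀ i, 0 ≤ p i) (hq : ∀ i, 0 ≤ q i)
    (hq0 : ∀ i, q i = 0 → p i = 0) (hps : ∑ i, p i = 1) (hqs : ∑ i, q i = 1) :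
    (∑ i, |p i - q i|)^2 / 2 ≤ ∑ i, (p i * Real.log (p i / q i) - p i + q i) := by
  set w : Fin k → ℝ := fun i => p i + 2 * q i with hw
  have hw0 : ∀ i, 0 ≤ w i := fun i => by
    have := hp i; have := hq i; simp only [hw]; linarith
  have step1 : ∀ i, 3 * (p i - q i)^2 / (2 * w i)
      ≤ p i * Real.log (p i / q i) - p i + q i := by
    intro i
    rcases eq_or_lt_of_le (hq i) with h0 | hpos
    · have hp0 : p i = 0 := hq0 i h0.symm
      simp [hw, hp0, ← h0]
    · exact erlb_pointwise (hp i) hpos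
  have hws : ∑ i, w i = 3 := by
    simp only [hw]
    rw [Finset.sum_add_distrib, ← Finset.mul_sum, hps, hqs]
    norm_num
  have cs := Finset.sum_mul_sq_le_sq_mul_sq Finset.univ
      (fun i => |p i - q i| / Real.sqrt (w i)) (fun i => Real.sqrt (w i))
  have e1 : ∑ i, |p i - q i| / Real.sqrt (w i) * Real.sqrt (w i) = ∑ i, |p i - q i| := by
    apply Finset.sum_congr rfl
    intro i _
    rcases eq_or_lt_of_le (hw0 i) with h0 | hpos
    · have hpq : p i = 0 ∧ q i = 0 := by
        have := hp i; have := hq i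
        constructor <;> (simp only [hw] at h0; linarith)
      simp [hpq.1, hpq.2]
    · rw [div_mul_cancel₀]
      exact (Real.sqrt_ne_zero'.mpr hpos)
  have e2 : ∑ i, (|p i - q i| / Real.sqrt (w i))^2 = ∑ i, (p i - q i)^2 / w i := by
    apply Finset.sum_congr rfl
    intro i _
    rw [div_pow, sq_abs, Real.sq_sqrt (hw0 i)]
  have e3 : ∑ i, (Real.sqrt (w i))^2 = (3:ℝ) := by
    rw [← hws]
    exact Finset.sum_congr rfl fun i _ => Real.sq_sqrt (hw0 i)
  rw [e1, e2, e3] at cs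
  have sum_ge : ∑ i, 3 * (p i - q i)^2 / (2 * w i)
      ≤ ∑ i, (p i * Real.log (p i / q i) - p i + q i) :=
    Finset.sum_le_sum fun i _ => step1 i
  have e4 : ∑ i, 3 * (p i - q i)^2 / (2 * w i) = (3/2) * ∑ i, (p i - q i)^2 / w i := by
    rw [Finset.mul_sum]
    apply Finset.sum_congr rfl
    intro i _
    rw [mul_comm 2 (w i), ← div_div]
    ring
  rw [e4] at sum_ge
  linarith

private lemma erlb_per_term {a b y c : ℝ} (ha : 0 ≤ a) (hb : 0 ≤ b) (hc0 : 0 < c)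
    (hc1 : c < 1) (hmix : (1 - c) * a + c * b = y) :
    Real.negMulLog y - (1 - c) * Real.negMulLog a - c * Real.negMulLog b
      = (1 - c) * (a * Real.log (a / y) - a + y) + c * (b * Real.log (b / y) - b + y) := by
  have hy : 0 ≤ y := by nlinarith
  rcases eq_or_lt_of_le hy with h0 | hypos
  · have ha0 : a = 0 := by nlinarith
    have hb0 : b = 0 := by nlinarith
    simp [← h0, ha0, hb0, Real.negMulLog]
  · have ha' : a * Real.log (a / y) = a * Real.log a - a * Real.log y := by
      rcases eq_or_lt_of_le ha with h | h
      · simp [← h]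
      · rw [Real.log_div h.ne' hypos.ne']; ring
    have hb' : b * Real.log (b / y) = b * Real.log b - b * Real.log y := by
      rcases eq_or_lt_of_le hb with h | h
      · simp [← h]
      · rw [Real.log_div h.ne' hypos.ne']; ring
    simp only [Real.negMulLog, ha', hb']
    linear_combination (Real.log y + 1) * hmix

theorem entropy_reduction_lower_bound (k : ℕ) (hk : 1 ≤ k)
    (π P : Fin k → ℝ) (hπ : ∀ i, 0 ≤ π i) (hπsum : ∑ i, π i = 1)
    (hP0 : ∀ i, 0 ≤ P i) (hP1 : ∀ i, P i ≤ 1)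
    (β J : ℝ) (hβ : β = ∑ i, π i * P i) (hβ0 : 0 < β) (hβ1 : β < 1)
    (hJ : J = 2 * ∑ i, π i * |P i - β|) :
    J ^ 2 / (8 * β * (1 - β)) ≤
      (∑ i, Real.negMulLog (π i))
        - (1 - β) * (∑ i, Real.negMulLog (π i * (1 - P i) / (1 - β)))
        - β * (∑ i, Real.negMulLog (π i * P i / β)) := by
  have hβ1' : 0 < 1 - β := by linarith
  set p0 : Fin k → ℝ := fun i => π i * (1 - P i) / (1 - β) with hp0def
  set p1 : Fin k → ℝ := fun i => π i * P i / β with hp1def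
  have hp0nn : ∀ i, 0 ≤ p0 i := fun i => by
    have := hπ i; have := hP1 i
    apply div_nonneg _ hβ1'.le
    nlinarith
  have hp1nn : ∀ i, 0 ≤ p1 i := fun i => by
    have := hπ i; have := hP0 i
    apply div_nonneg _ hβ0.le
    nlinarith
  have hp1sum : ∑ i, p1 i = 1 := by
    simp only [hp1def]
    rw [← Finset.sum_div, ← hβ, div_self hβ0.ne']
  have hp0sum : ∑ i, p0 i = 1 := by
    simp only [hp0def]
    rw [← Finset.sum_div]
    have : ∑ i, π i * (1 - P i) = 1 - β := by
      have : ∑ i, π i * (1 - P i) = (∑ i, π i) - ∑ i, π i * P i := by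
        rw [← Finset.sum_sub_distrib]
        exact Finset.sum_congr rfl fun i _ => by ring
      rw [this, hπsum, ← hβ]
    rw [this, div_self hβ1'.ne']
  have hmix : ∀ i, (1 - β) * p0 i + β * p1 i = π i := by
    intro i
    simp only [hp0def, hp1def]
    field_simp; ring
  -- Gap identity
  have gap_eq : (∑ i, Real.negMulLog (π i))
        - (1 - β) * (∑ i, Real.negMulLog (p0 i))
        - β * (∑ i, Real.negMulLog (p1 i))
      = (1 - β) * (∑ i, (p0 i * Real.log (p0 i / π i) - p0 i + π i))
        + β * (∑ i, (p1 i * Real.log (p1 i / π i) - p1 i + π i)) := by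
    rw [Finset.mul_sum, Finset.mul_sum, Finset.mul_sum, Finset.mul_sum,
      ← Finset.sum_sub_distrib, ← Finset.sum_sub_distrib, ← Finset.sum_add_distrib]
    apply Finset.sum_congr rfl
    intro i _
    exact erlb_per_term (hp0nn i) (hp1nn i) hβ0 hβ1 (hmix i)
  rw [gap_eq]
  -- Pinsker applications
  have hzero : ∀ i, π i = 0 → p0 i = 0 := by
    intro i h; simp only [hp0def, h]; ring
  have hzero1 : ∀ i, π i = 0 → p1 i = 0 := by
    intro i h; simp only [hp1def, h]; ring
  have hK0 := erlb_pinsker p0 π hp0nn hπ hzero hp0sum hπsum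
  have hK1 := erlb_pinsker p1 π hp1nn hπ hzero1 hp1sum hπsum
  -- total variation computations
  set S : ℝ := ∑ i, π i * |P i - β| with hS
  have hSnn : 0 ≤ S := Finset.sum_nonneg fun i _ =>
    mul_nonneg (hπ i) (abs_nonneg _)
  have hT0 : ∑ i, |p0 i - π i| = S / (1 - β) := by
    rw [hS, Finset.sum_div]
    apply Finset.sum_congr rfl
    intro i _
    have e : p0 i - π i = π i * (β - P i) / (1 - β) := by
      simp only [hp0def]; field_simp; ring
    rw [e, abs_div, abs_of_pos hβ1', abs_mul, abs_of_nonneg (hπ i), abs_sub_comm]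
  have hT1 : ∑ i, |p1 i - π i| = S / β := by
    rw [hS, Finset.sum_div]
    apply Finset.sum_congr rfl
    intro i _
    have e : p1 i - π i = π i * (P i - β) / β := by
      simp only [hp1def]; field_simp
    rw [e, abs_div, abs_of_pos hβ0, abs_mul, abs_of_nonneg (hπ i)]
  rw [hT0] at hK0
  rw [hT1] at hK1
  have hJS : J = 2 * S := by rw [hJ, hS]
  have final : J ^ 2 / (8 * β * (1 - β))
      = (1 - β) * ((S / (1 - β))^2 / 2) + β * ((S / β)^2 / 2) := by
    rw [hJS]
    field_simp
    ring
  rw [final]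
  gcongr
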